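/- Let M_{1,b} be a regular ACM and let x ∈ M_{1,b} be irreducible in M_{1,b}. If x = a₁a₂⋯a_n is the prime factorization of x in ℤ (counting multiplicity), then n ≤ φ(b), where φ is Euler's totient function. -/

import Mathlib

/-- Membership in the arithmetical congruence monoid `M_{a,b} = (a + b ℕ₀) ∪ {1}`. -/
def acmMem (a b x : ℕ) : Prop := x = 1 ∨ ∃ k : ℕ, x = a + k * b

/-- `x` is an atom (irreducible) of `M_{a,b}`. -/
def acmAtom (a b x : ℕ) : Prop :=
  acmMem a b x ∧ x ≠ 1 ∧
    ∀ y z : ℕ, acmMem a b y → acmMem a b z → x = y * z → y = 1 ∨ z = 1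

/-- `s` is a factorization of `x` into atoms of `M_{a,b}`. -/
def acmFactorization (a b x : ℕ) (s : Multiset ℕ) : Prop :=
  (∀ u ∈ s, acmAtom a b u) ∧ s.prod = x

/-- The distance between two factorizations. -/
def facDist (s t : Multiset ℕ) : ℕ := max (Multiset.card (s - t)) (Multiset.card (t - s))

/-- There is an `N`-chain of factorizations of `x` from `z₁` to `z₂` in `M_{a,b}`. -/
def acmNChain (a b x N : ℕ) (z₁ z₂ : Multiset ℕ) : Prop :=
  ∃ L : List (Multiset ℕ), L ≠ [] ∧ L.head? = some z₁ ∧ L.getLast? = some z₂ ∧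
    (∀ z ∈ L, acmFactorization a b x z) ∧ L.Chain' (fun s t => facDist s t ≤ N)

/-- The set of `N` such that any two factorizations of any element of `M_{a,b}`
are connected by an `N`-chain; `c(M) = n` iff `n` is the least element of this set. -/
def acmCatSet (a b : ℕ) : Set ℕ :=
  {N | ∀ x, acmMem a b x → ∀ z₁ z₂, acmFactorization a b x z₁ →
      acmFactorization a b x z₂ → acmNChain a b x N z₁ z₂}

/-- Divisibility inside the monoid `M_{a,b}`. -/
def acmDvd (a b x y : ℕ) : Prop := ∃ k, acmMem a b k ∧ x * k = y

/-- `s` is a bullet of `x` in `M_{a,b}`. -/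
def acmBullet (a b x : ℕ) (s : Multiset ℕ) : Prop :=
  (∀ u ∈ s, acmAtom a b u) ∧ acmDvd a b x s.prod ∧
    ∀ t : Multiset ℕ, t ≤ s → t ≠ s → ¬ acmDvd a b x t.prod

/-- Omega primality of `x` in `M_{a,b}`: the sup of the lengths of bullets of `x`. -/
noncomputable def acmOmega (a b x : ℕ) : ℕ∞ :=
  sSup {n : ℕ∞ | ∃ s : Multiset ℕ, acmBullet a b x s ∧ (Multiset.card s : ℕ∞) = n}

/-- The set of factorization lengths of `x` in `M_{a,b}`. -/
def acmLengthSet (a b x : ℕ) : Set ℕ :=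
  {n | ∃ s : Multiset ℕ, acmFactorization a b x s ∧ Multiset.card s = n}

/-- `x` has at least two distinct factorization lengths. -/
def acmLI (a b x : ℕ) : Prop := ∃ m ∈ acmLengthSet a b x, ∃ n ∈ acmLengthSet a b x, m ≠ n

/-- The length density of an element `x` of `M_{a,b}`. -/
noncomputable def acmLD (a b x : ℕ) : ℝ :=
  (((acmLengthSet a b x).ncard : ℝ) - 1) /
    (((sSup (acmLengthSet a b x) : ℕ) : ℝ) - ((sInf (acmLengthSet a b x) : ℕ) : ℝ))


lemma acmMem_of_modeq_one (b m : ℕ) (hm : 0 < m) (h : m ≡ 1 [MOD b]) :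
    acmMem 1 b m := by
  rcases (Nat.modEq_iff_dvd' hm).mp h.symm with ⟨k, hk⟩
  have hm' : m = 1 + b * k := by omega
  exact Or.inr ⟨k, by rw [hm', Nat.mul_comm]⟩


/-- If `x` is irreducible in the regular ACM `M_{1,b}`, then the number of
prime factors of `x` in `ℤ` (with multiplicity) is at most `φ(b)`. -/
theorem regular_atom_prime_length (b : ℕ) (hb : 0 < b) (x : ℕ)
    (hx : acmAtom 1 b x) :
    x.primeFactorsList.length ≤ Nat.totient b := by
  haveI : NeZero b := ⟨hb.ne'⟩
  obtain ⟨hmem, hx1, hatom⟩ := hx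
  obtain ⟨k, hk⟩ := hmem.resolve_left hx1
  have hxpos : 0 < x := by omega
  set L := x.primeFactorsList with hL
  have hprodL : L.prod = x := Nat.prod_primeFactorsList hxpos.ne'
  have hprime : ∀ p ∈ L, Nat.Prime p := fun p hp => Nat.prime_of_mem_primeFactorsList hp
  have hxb : x ≡ 1 [MOD b] := by
    show x % b = 1 % b
    rw [hk, Nat.add_mul_mod_self_right]
  have hcop : Nat.Coprime x b := by
    rw [hk]; simp [Nat.coprime_add_mul_left_left]
  -- coprimality of partial products
  have copTake : ∀ m : ℕ, Nat.Coprime ((L.take m).prod) b := by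
    intro m
    refine Nat.Coprime.coprime_dvd_left ?_ hcop
    exact Dvd.intro _ (by rw [List.prod_take_mul_prod_drop, hprodL])
  by_contra hcon
  push_neg at hcon
  -- key claim
  have key : ∀ i j : ℕ, i < j → j ≤ b.totient →
      (((L.take i).prod : ZMod b) = ((L.take j).prod : ZMod b)) → False := by
    intro i j hij hjn hcast
    have hjL : j < L.length := lt_of_le_of_lt hjn hcon
    set mid := (L.drop i).take (j - i) with hmid
    have htake : L.take j = L.take i ++ mid := by
      have : j = i + (j - i) := by omega
      rw [this, List.take_add]
    have hsplit : (L.take j).prod = (L.take i).prod * mid.prod := by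
      rw [htake, List.prod_append]
    -- mid is nonempty and all its members are prime
    have hmid_sub : ∀ p ∈ mid, Nat.Prime p := by
      intro p hp
      exact hprime p (List.mem_of_mem_drop (List.mem_of_mem_take hp))
    have hmid_ne : mid ≠ [] := by
      have hlen : mid.length = min (j - i) (L.length - i) := by
        simp [hmid]
      intro hnil
      rw [hnil] at hlen
      simp at hlen
      omega
    obtain ⟨p, hp⟩ := List.exists_mem_of_ne_nil mid hmid_ne
    have hpdvd : p ∣ mid.prod := List.dvd_prod hp
    have hmidpos : 0 < mid.prod := List.prod_pos fun a ha => (hmid_sub a ha).pos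
    -- mid.prod ≡ 1 mod b
    have hu : IsUnit ((L.take i).prod : ZMod b) := by
      have := (ZMod.unitOfCoprime _ (copTake i)).isUnit
      rwa [ZMod.coe_unitOfCoprime] at this
    have hM1 : ((mid.prod : ℕ) : ZMod b) = ((1 : ℕ) : ZMod b) := by
      have hmul : ((L.take i).prod : ZMod b) * ((mid.prod : ℕ) : ZMod b)
          = ((L.take i).prod : ZMod b) * 1 := by
        rw [mul_one, ← Nat.cast_mul, ← hsplit, ← hcast]
      have := hu.mul_left_cancel hmul
      simpa using this
    have hMmem : acmMem 1 b mid.prod :=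
      acmMem_of_modeq_one b _ hmidpos ((ZMod.natCast_eq_natCast_iff _ _ _).mp hM1)
    -- the complementary factor
    set z := (L.take i).prod * (L.drop j).prod with hz
    have hxfac : x = mid.prod * z := by
      have h1 : (L.take j).prod * (L.drop j).prod = x := by
        rw [List.prod_take_mul_prod_drop, hprodL]
      rw [hz, ← h1, hsplit]; ring
    have hzpos : 0 < z := by
      have h1 : 0 < (L.take i).prod := List.prod_pos fun a ha =>
        (hprime a (List.mem_of_mem_take ha)).pos
      have h2 : 0 < (L.drop j).prod := List.prod_pos fun a ha =>
        (hprime a (List.mem_of_mem_drop ha)).pos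
      exact mul_pos h1 h2
    have hz1 : ((z : ℕ) : ZMod b) = ((1 : ℕ) : ZMod b) := by
      have hx1' : ((x : ℕ) : ZMod b) = ((1 : ℕ) : ZMod b) :=
        (ZMod.natCast_eq_natCast_iff _ _ _).mpr hxb
      have : ((mid.prod : ℕ) : ZMod b) * ((z : ℕ) : ZMod b) = ((1:ℕ) : ZMod b) := by
        rw [← Nat.cast_mul, ← hxfac]; exact hx1'
      rw [hM1] at this
      simpa using this
    have hzmem : acmMem 1 b z :=
      acmMem_of_modeq_one b _ hzpos ((ZMod.natCast_eq_natCast_iff _ _ _).mp hz1)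
    -- both factors are ≠ 1
    have hMne : mid.prod ≠ 1 := by
      intro h1
      have := Nat.le_of_dvd (by omega) hpdvd
      have := (hmid_sub p hp).two_le
      omega
    have hzne : z ≠ 1 := by
      have hdropne : L.drop j ≠ [] := by
        intro hnil
        have : (L.drop j).length = L.length - j := List.length_drop
        rw [hnil] at this
        simp at this
        omega
      obtain ⟨q, hq⟩ := List.exists_mem_of_ne_nil _ hdropne
      have hqdvd : q ∣ z := Dvd.dvd.mul_left (List.dvd_prod hq) _
      intro h1
      have := Nat.le_of_dvd (by omega) hqdvd
      have := (hprime q (List.mem_of_mem_drop hq)).two_le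
      omega
    rcases hatom mid.prod z hMmem hzmem hxfac with h | h
    · exact hMne h
    · exact hzne h
  -- pigeonhole on partial products in (ZMod b)ˣ
  have hcard : Fintype.card (ZMod b)ˣ < Fintype.card (Fin (b.totient + 1)) := by
    rw [ZMod.card_units_eq_totient, Fintype.card_fin]; omega
  obtain ⟨i, j, hne, hfij⟩ := Fintype.exists_ne_map_eq_of_card_lt
    (fun i : Fin (b.totient + 1) => ZMod.unitOfCoprime _ (copTake i)) hcard
  have hcasts : (((L.take (i:ℕ)).prod : ℕ) : ZMod b) = (((L.take (j:ℕ)).prod : ℕ) : ZMod b) := by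
    have := congrArg (Units.val) hfij
    simpa [ZMod.coe_unitOfCoprime] using this
  rcases lt_or_gt_of_ne (fun h => hne (Fin.ext h) : (i:ℕ) ≠ (j:ℕ)) with h | h
  · exact key i j h (by omega) hcasts
  · exact key j i h (by omega) hcasts.symm
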